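/- If G is a self-complementary finite simple graph on n vertices with independence number k = α(G), then √n ≤ Θ(G) ≤ 16 · n^{(k−1)/(k+1)}. -/

import Mathlib

open scoped Classical

noncomputable def indepNum {V : Type*} [Fintype V] (G : SimpleGraph V) : ℕ :=
  sSup { n : ℕ | ∃ s : Finset V, (∀ i ∈ s, ∀ j ∈ s, i ≠ j → ¬ G.Adj i j) ∧ s.card = n }

def strongProd {α β : Type*} (G : SimpleGraph α) (H : SimpleGraph β) :
    SimpleGraph (α × β) where
  Adj x y := x ≠ y ∧ (x.1 = y.1 ∨ G.Adj x.1 y.1) ∧ (x.2 = y.2 ∨ H.Adj x.2 y.2)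
  symm := by
    constructor
    rintro x y ⟨h0, h1, h2⟩
    exact ⟨h0.symm, h1.imp Eq.symm (fun h => h.symm), h2.imp Eq.symm (fun h => h.symm)⟩
  loopless := by constructor; rintro x ⟨h0, -, -⟩; exact h0 rfl

def strongPow {α : Type*} (G : SimpleGraph α) (k : ℕ) : SimpleGraph (Fin k → α) where
  Adj x y := x ≠ y ∧ ∀ i, x i = y i ∨ G.Adj (x i) (y i)
  symm := by
    constructor
    rintro x y ⟨h0, h1⟩
    exact ⟨h0.symm, fun i => (h1 i).imp Eq.symm (fun h => h.symm)⟩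
  loopless := by constructor; rintro x ⟨h0, -⟩; exact h0 rfl

noncomputable def shannonCapacity {α : Type*} [Fintype α] (G : SimpleGraph α) : ℝ :=
  ⨆ k : ℕ+, (indepNum (strongPow G (k : ℕ)) : ℝ) ^ ((1 : ℝ) / ((k : ℕ) : ℝ))

lemma indepNum_bdd {V : Type*} [Fintype V] (G : SimpleGraph V) :
    BddAbove { n : ℕ | ∃ s : Finset V, (∀ i ∈ s, ∀ j ∈ s, i ≠ j → ¬ G.Adj i j) ∧ s.card = n } := by
  refine ⟨Fintype.card V, ?_⟩
  rintro m ⟨s, -, rfl⟩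
  simpa using s.card_le_univ

lemma indepNum_le_card {V : Type*} [Fintype V] (G : SimpleGraph V) :
    indepNum G ≤ Fintype.card V := by
  refine csSup_le ⟨0, ⟨∅, by simp⟩⟩ ?_
  rintro m ⟨s, -, rfl⟩
  simpa using s.card_le_univ

lemma le_indepNum {V : Type*} [Fintype V] (G : SimpleGraph V) (s : Finset V)
    (h : ∀ i ∈ s, ∀ j ∈ s, i ≠ j → ¬ G.Adj i j) : s.card ≤ indepNum G :=
  le_csSup (indepNum_bdd G) ⟨s, h, rfl⟩

lemma term_le_card {V : Type*} [Fintype V] (G : SimpleGraph V) (m : ℕ+) :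
    (indepNum (strongPow G (m : ℕ)) : ℝ) ^ ((1 : ℝ) / ((m : ℕ) : ℝ))
      ≤ (Fintype.card V : ℝ) := by
  have hm : ((m : ℕ) : ℝ) ≠ 0 := by exact_mod_cast m.ne_zero
  have h1 : indepNum (strongPow G (m : ℕ)) ≤ Fintype.card V ^ (m : ℕ) := by
    calc indepNum (strongPow G (m : ℕ)) ≤ Fintype.card (Fin (m : ℕ) → V) := indepNum_le_card _
      _ = Fintype.card V ^ (m : ℕ) := by simp [Fintype.card_fun]
  calc (indepNum (strongPow G (m : ℕ)) : ℝ) ^ ((1 : ℝ) / ((m : ℕ) : ℝ))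
      ≤ ((Fintype.card V ^ (m : ℕ) : ℕ) : ℝ) ^ ((1 : ℝ) / ((m : ℕ) : ℝ)) := by
        apply Real.rpow_le_rpow (by positivity) (by exact_mod_cast h1) (by positivity)
    _ = ((Fintype.card V : ℝ) ^ (((m : ℕ) : ℝ))) ^ ((1 : ℝ) / ((m : ℕ) : ℝ)) := by
        rw [Real.rpow_natCast]; push_cast; ring_nf
    _ = (Fintype.card V : ℝ) ^ ((((m : ℕ) : ℝ)) * ((1 : ℝ) / ((m : ℕ) : ℝ))) := by
        rw [← Real.rpow_mul (by positivity)]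
    _ = (Fintype.card V : ℝ) := by
        rw [mul_one_div, div_self hm, Real.rpow_one]

lemma capacity_bdd {V : Type*} [Fintype V] (G : SimpleGraph V) :
    BddAbove (Set.range fun k : ℕ+ =>
      (indepNum (strongPow G (k : ℕ)) : ℝ) ^ ((1 : ℝ) / ((k : ℕ) : ℝ))) := by
  refine ⟨(Fintype.card V : ℝ), ?_⟩
  rintro x ⟨m, rfl⟩
  exact term_le_card G m

lemma capacity_le_card {V : Type*} [Fintype V] (G : SimpleGraph V) :
    shannonCapacity G ≤ (Fintype.card V : ℝ) :=
  ciSup_le fun m => term_le_card G m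

lemma card_le_indepNum_two {V : Type*} [Fintype V] (G : SimpleGraph V)
    (φ : G ≃g Gᶜ) : Fintype.card V ≤ indepNum (strongPow G 2) := by
  classical
  set f : V → (Fin 2 → V) := fun v => ![v, φ v] with hf
  have hinj : Function.Injective f := by
    intro v w h
    have := congrFun h 0
    simpa [hf] using this
  have hcard : (Finset.univ.image f).card = Fintype.card V := by
    rw [Finset.card_image_of_injective _ hinj, Finset.card_univ]
  rw [← hcard]
  apply le_indepNum
  intro x hx y hy hxy hadj
  obtain ⟨v, -, rfl⟩ := Finset.mem_image.1 hx
  obtain ⟨w, -, rfl⟩ := Finset.mem_image.1 hy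
  have hvw : v ≠ w := fun h => hxy (by rw [h])
  obtain ⟨-, hall⟩ := hadj
  have h0 : G.Adj v w := by
    have := hall 0
    simpa [hf, hvw] using this
  have h1 : G.Adj (φ v) (φ w) := by
    have hne : φ v ≠ φ w := fun h => hvw (φ.injective h)
    have := hall 1
    simpa [hf, hne] using this
  have : Gᶜ.Adj (φ v) (φ w) := φ.map_rel_iff.2 h0
  exact this.2 h1

lemma ramsey_aux {V : Type*} (G : SimpleGraph V) :
    ∀ (N a b : ℕ), a + b ≤ N → ∀ s : Finset V,
    (∀ t ⊆ s, (∀ i ∈ t, ∀ j ∈ t, i ≠ j → G.Adj i j) → t.card ≤ a) →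
    (∀ t ⊆ s, (∀ i ∈ t, ∀ j ∈ t, i ≠ j → ¬ G.Adj i j) → t.card ≤ b) →
    s.card < (a + b).choose a := by
  classical
  intro N
  induction N with
  | zero =>
    intro a b hab s hc hi
    have ha : a = 0 := by omega
    have hb : b = 0 := by omega
    subst ha; subst hb
    rcases s.eq_empty_or_nonempty with rfl | ⟨v, hv⟩
    · simp
    · have := hc {v} (Finset.singleton_subset_iff.2 hv) (by simp)
      simp at this
  | succ N ih =>
    intro a b hab s hc hi
    rcases s.eq_empty_or_nonempty with rfl | ⟨v, hv⟩
    · simpa using Nat.choose_pos (Nat.le_add_right a b)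
    have ha : 1 ≤ a := by
      have := hc {v} (Finset.singleton_subset_iff.2 hv) (by simp)
      simpa using this
    have hb : 1 ≤ b := by
      have := hi {v} (Finset.singleton_subset_iff.2 hv) (by simp)
      simpa using this
    obtain ⟨a', rfl⟩ : ∃ a', a = a' + 1 := ⟨a - 1, by omega⟩
    obtain ⟨b', rfl⟩ : ∃ b', b = b' + 1 := ⟨b - 1, by omega⟩
    set Nv : Finset V := (s.erase v).filter (fun u => G.Adj v u) with hNv
    set Mv : Finset V := (s.erase v).filter (fun u => ¬ G.Adj v u) with hMv
    have hcard : s.card = 1 + Nv.card + Mv.card := by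
      have h1 : Nv.card + Mv.card = (s.erase v).card := by
        rw [hNv, hMv]
        convert Finset.card_filter_add_card_filter_not
          (s := s.erase v) (p := fun u => G.Adj v u) using 3
      have h2 : (s.erase v).card = s.card - 1 := Finset.card_erase_of_mem hv
      have h3 : 1 ≤ s.card := Finset.card_pos.2 ⟨v, hv⟩
      omega
    have hvN : v ∉ Nv := fun h => (Finset.mem_erase.1 (Finset.mem_filter.1 h).1).1 rfl
    have hvM : v ∉ Mv := fun h => (Finset.mem_erase.1 (Finset.mem_filter.1 h).1).1 rfl
    have hNs : Nv ⊆ s := (Finset.filter_subset _ _).trans (Finset.erase_subset _ _)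
    have hMs : Mv ⊆ s := (Finset.filter_subset _ _).trans (Finset.erase_subset _ _)
    have hN : Nv.card < (a' + (b' + 1)).choose a' := by
      refine ih a' (b' + 1) (by omega) Nv ?_ ?_
      · intro t hts hclq
        have hvt : v ∉ t := fun h => hvN (hts h)
        have hins := hc (insert v t) ?_ ?_
        · rw [Finset.card_insert_of_notMem hvt] at hins; omega
        · exact Finset.insert_subset hv (hts.trans hNs)
        · intro i hi' j hj' hij
          rcases Finset.mem_insert.1 hi' with rfl | hi'' <;>
            rcases Finset.mem_insert.1 hj' with rfl | hj''
          · exact absurd rfl hij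
          · exact (Finset.mem_filter.1 (hts hj'')).2
          · exact ((Finset.mem_filter.1 (hts hi'')).2).symm
          · exact hclq i hi'' j hj'' hij
      · intro t hts hind
        exact hi t (hts.trans hNs) hind
    have hM : Mv.card < ((a' + 1) + b').choose (a' + 1) := by
      refine ih (a' + 1) b' (by omega) Mv ?_ ?_
      · intro t hts hclq
        exact hc t (hts.trans hMs) hclq
      · intro t hts hind
        have hvt : v ∉ t := fun h => hvM (hts h)
        have hins := hi (insert v t) ?_ ?_
        · rw [Finset.card_insert_of_notMem hvt] at hins; omega
        · exact Finset.insert_subset hv (hts.trans hMs)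
        · intro i hi' j hj' hij
          rcases Finset.mem_insert.1 hi' with rfl | hi'' <;>
            rcases Finset.mem_insert.1 hj' with rfl | hj''
          · exact absurd rfl hij
          · exact (Finset.mem_filter.1 (hts hj'')).2
          · exact fun h => (Finset.mem_filter.1 (hts hi'')).2 h.symm
          · exact hind i hi'' j hj'' hij
    have key : (a' + 1 + (b' + 1)).choose (a' + 1)
        = (a' + (b' + 1)).choose a' + ((a' + 1) + b').choose (a' + 1) := by
      have h1 : a' + 1 + (b' + 1) = (a' + b' + 1) + 1 := by omega
      have h2 : a' + (b' + 1) = a' + b' + 1 := by omega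
      have h3 : (a' + 1) + b' = a' + b' + 1 := by omega
      rw [h1, h2, h3, Nat.choose_succ_succ]
    omega

lemma choose_le_two_pow' (n r : ℕ) : n.choose r ≤ 2 ^ n := by
  rcases le_or_gt r n with h | h
  · calc n.choose r ≤ ∑ i ∈ Finset.range (n + 1), n.choose i :=
        Finset.single_le_sum (fun _ _ => Nat.zero_le _) (Finset.mem_range.2 (by omega))
      _ = 2 ^ n := Nat.sum_range_choose n
  · rw [Nat.choose_eq_zero_of_lt h]; exact Nat.zero_le _

theorem stmt1 {V : Type*} [Fintype V] (G : SimpleGraph V) (n k : ℕ)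
    (hn : Fintype.card V = n) (hsc : Nonempty (G ≃g Gᶜ)) (hk : indepNum G = k) :
    Real.sqrt n ≤ shannonCapacity G ∧
    shannonCapacity G ≤ 16 * (n : ℝ) ^ (((k : ℝ) - 1) / ((k : ℝ) + 1)) := by
  obtain ⟨φ⟩ := hsc
  -- lower bound
  have hlow : Real.sqrt n ≤ shannonCapacity G := by
    have h2 : (n : ℕ) ≤ indepNum (strongPow G 2) := hn ▸ card_le_indepNum_two G φ
    have hterm : Real.sqrt n ≤
        (indepNum (strongPow G ((2 : ℕ+) : ℕ)) : ℝ) ^ ((1 : ℝ) / (((2 : ℕ+) : ℕ) : ℝ)) := by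
      have : (((2 : ℕ+) : ℕ) : ℝ) = 2 := by norm_num
      rw [this, Real.sqrt_eq_rpow]
      apply Real.rpow_le_rpow (by positivity) (by exact_mod_cast h2) (by norm_num)
    exact hterm.trans (le_ciSup (capacity_bdd G) (2 : ℕ+))
  refine ⟨hlow, ?_⟩
  -- upper bound
  rcases Nat.eq_zero_or_pos n with rfl | hnpos
  · -- empty case
    have hk0 : k = 0 := by
      have := indepNum_le_card G
      omega
    subst hk0
    have hrhs : (16 : ℝ) * ((0 : ℕ) : ℝ) ^ ((((0 : ℕ) : ℝ) - 1) / (((0 : ℕ) : ℝ) + 1)) = 0 := by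
      rw [show ((((0 : ℕ) : ℝ) - 1) / (((0 : ℕ) : ℝ) + 1)) = -1 by norm_num]
      rw [show (((0 : ℕ)) : ℝ) = 0 by norm_num, Real.zero_rpow (by norm_num)]
      ring
    rw [hrhs]
    calc shannonCapacity G ≤ (Fintype.card V : ℝ) := capacity_le_card G
      _ = 0 := by rw [hn]; norm_num
  · -- nonempty case
    have hk1 : 1 ≤ k := by
      obtain ⟨v⟩ : Nonempty V := Fintype.card_pos_iff.1 (by omega)
      have : ({v} : Finset V).card ≤ indepNum G := le_indepNum G {v} (by simp)
      simpa [hk] using this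
    -- Ramsey: n < 4 ^ (k+1)
    have hindep : ∀ t : Finset V, (∀ i ∈ t, ∀ j ∈ t, i ≠ j → ¬ G.Adj i j) → t.card ≤ k := by
      intro t ht
      have := le_indepNum G t ht
      omega
    have hclique : ∀ t : Finset V, (∀ i ∈ t, ∀ j ∈ t, i ≠ j → G.Adj i j) → t.card ≤ k := by
      intro t ht
      classical
      have himg : (t.image φ).card ≤ indepNum G := by
        apply le_indepNum
        intro x hx y hy hxy hadj
        obtain ⟨i, hi, rfl⟩ := Finset.mem_image.1 hx
        obtain ⟨j, hj, rfl⟩ := Finset.mem_image.1 hy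
        have hij : i ≠ j := fun h => hxy (by rw [h])
        have : Gᶜ.Adj (φ i) (φ j) := φ.map_rel_iff.2 (ht i hi j hj hij)
        exact this.2 hadj
      rw [Finset.card_image_of_injective _ φ.injective] at himg
      omega
    have hram : n < (k + k).choose k := by
      have := ramsey_aux G (k + k) k k le_rfl Finset.univ
        (fun t _ ht => hclique t ht) (fun t _ ht => hindep t ht)
      simpa [hn] using this
    have hn4 : n < 4 ^ (k + 1) := by
      have h1 : (k + k).choose k ≤ 2 ^ (k + k) := choose_le_two_pow' _ _
      have h2 : (2 : ℕ) ^ (k + k) ≤ 4 ^ (k + 1) := by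
        calc (2 : ℕ) ^ (k + k) = 4 ^ k := by rw [show k + k = 2 * k by ring, pow_mul]; norm_num
          _ ≤ 4 ^ (k + 1) := Nat.pow_le_pow_right (by norm_num) (by omega)
      omega
    -- Real inequalities
    have hnR : (0 : ℝ) < (n : ℝ) := by exact_mod_cast hnpos
    have hkR : ((k : ℝ) + 1) ≠ 0 := by positivity
    have hmain : (n : ℝ) ≤ 16 * (n : ℝ) ^ (((k : ℝ) - 1) / ((k : ℝ) + 1)) := by
      have hsplit : (n : ℝ) = (n : ℝ) ^ (((k : ℝ) - 1) / ((k : ℝ) + 1))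
          * (n : ℝ) ^ ((2 : ℝ) / ((k : ℝ) + 1)) := by
        rw [← Real.rpow_add hnR]
        rw [show ((k : ℝ) - 1) / ((k : ℝ) + 1) + (2 : ℝ) / ((k : ℝ) + 1) = 1 by
          field_simp; ring]
        rw [Real.rpow_one]
      have hsmall : (n : ℝ) ^ ((2 : ℝ) / ((k : ℝ) + 1)) ≤ 16 := by
        have hle : (n : ℝ) ≤ ((4 : ℝ) ^ ((k + 1 : ℕ) : ℝ)) := by
          rw [Real.rpow_natCast]
          exact_mod_cast hn4.le
        calc (n : ℝ) ^ ((2 : ℝ) / ((k : ℝ) + 1))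
            ≤ ((4 : ℝ) ^ ((k + 1 : ℕ) : ℝ)) ^ ((2 : ℝ) / ((k : ℝ) + 1)) :=
              Real.rpow_le_rpow (by positivity) hle (by positivity)
          _ = (4 : ℝ) ^ (((k + 1 : ℕ) : ℝ) * ((2 : ℝ) / ((k : ℝ) + 1))) := by
              rw [← Real.rpow_mul (by norm_num)]
          _ = (4 : ℝ) ^ (2 : ℝ) := by
              congr 1
              push_cast
              field_simp
          _ = 16 := by
              rw [show (2 : ℝ) = ((2 : ℕ) : ℝ) by norm_num, Real.rpow_natCast]
              norm_num
      calc (n : ℝ) = (n : ℝ) ^ (((k : ℝ) - 1) / ((k : ℝ) + 1))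
          * (n : ℝ) ^ ((2 : ℝ) / ((k : ℝ) + 1)) := hsplit
        _ ≤ (n : ℝ) ^ (((k : ℝ) - 1) / ((k : ℝ) + 1)) * 16 :=
            mul_le_mul_of_nonneg_left hsmall (by positivity)
        _ = 16 * (n : ℝ) ^ (((k : ℝ) - 1) / ((k : ℝ) + 1)) := by ring
    calc shannonCapacity G ≤ (Fintype.card V : ℝ) := capacity_le_card G
      _ = (n : ℝ) := by rw [hn]
      _ ≤ 16 * (n : ℝ) ^ (((k : ℝ) - 1) / ((k : ℝ) + 1)) := hmain
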